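/- Let h ⊆ so(V) be a Lie subalgebra acting on a finite-dimensional real inner product space V, T ∈ Λ³V an h-invariant 3-form, and R: Λ²V → h an h-equivariant linear map. Then the bracket on g := h ⊕ V defined by [A+X, B+Y] := ([A,B]_h − R(X∧Y)) + (AY − BX − T(X,Y)) satisfies the Jacobi identity if and only if (1) Σ_cyclic{X,Y,Z} R(X,Y,Z,V) = σ_T(X,Y,Z,V) for all X,Y,Z,V ∈ V, and (2) Σ_cyclic{X,Y,Z} R(T(X,Y) ∧ Z) = 0 for all X,Y,Z ∈ V. -/

import Mathlib

/- STATEMENT 4 (Nomizu construction): Let h ⊆ so(V) be a Lie subalgebra acting on a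
finite-dimensional real inner product space V, T ∈ Λ³V an h-invariant 3-form, and
R : Λ²V → h an h-equivariant linear map. Then the bracket on g := h ⊕ V defined by
  [A+X, B+Y] := ([A,B]_h − R(X∧Y)) + (AY − BX − T(X,Y))
satisfies the Jacobi identity if and only if
 (1) Σ_cyclic{X,Y,Z} R(X,Y,Z,W) = σ_T(X,Y,Z,W)  (first Bianchi condition), and
 (2) Σ_cyclic{X,Y,Z} R(T(X,Y) ∧ Z) = 0           (second Bianchi condition).

R(X∧Y) is encoded as a bilinear map `R : V →ₗ V →ₗ End(V)` with `R X X = 0`, taking values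
in h; `Tv X Y` is the vector dual to T(X,Y,·); R(X,Y,Z,W) := ⟨R(X∧Y)Z, W⟩;
σ_T(X,Y,Z,W) = Σ_cyclic{X,Y,Z} ⟨T(X,Y), T(Z,W)⟩. -/

open scoped RealInnerProductSpace

attribute [local instance 100] LieRing.ofAssociativeRing

/-- the Nomizu bracket on `End(V) × V`; its restriction to `h × V` is the bracket
`[A+X, B+Y] = ([A,B] − R(X∧Y)) + (AY − BX − T(X,Y))` of the Nomizu construction. -/
def nomizuBracket {E : Type*} [NormedAddCommGroup E] [InnerProductSpace ℝ E]
    (Tv : E → E → E) (R : E →ₗ[ℝ] E →ₗ[ℝ] Module.End ℝ E)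
    (p q : Module.End ℝ E × E) : Module.End ℝ E × E :=
  (⁅p.1, q.1⁆ - R p.2 q.2, p.1 q.2 - q.1 p.2 - Tv p.2 q.2)

theorem nomizu_jacobi_iff_bianchi
    {E : Type*} [NormedAddCommGroup E] [InnerProductSpace ℝ E] [FiniteDimensional ℝ E]
    (h : LieSubalgebra ℝ (Module.End ℝ E))
    (hskew : ∀ A ∈ h, ∀ X Y : E, ⟪A X, Y⟫ = -⟪X, A Y⟫)
    (T : AlternatingMap ℝ E ℝ (Fin 3)) (Tv : E → E → E)
    (hTv : ∀ X Y Z : E, ⟪Tv X Y, Z⟫ = T ![X, Y, Z])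
    (hTinv : ∀ A ∈ h, ∀ X Y Z : E,
      T ![A X, Y, Z] + T ![X, A Y, Z] + T ![X, Y, A Z] = 0)
    (R : E →ₗ[ℝ] E →ₗ[ℝ] Module.End ℝ E)
    (hRalt : ∀ X : E, R X X = 0)
    (hRmem : ∀ X Y : E, R X Y ∈ h)
    (hReq : ∀ A ∈ h, ∀ X Y : E, R (A X) Y + R X (A Y) = ⁅A, R X Y⁆) :
    (∀ p q r : Module.End ℝ E × E, p.1 ∈ h → q.1 ∈ h → r.1 ∈ h →
        nomizuBracket Tv R (nomizuBracket Tv R p q) r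
          + nomizuBracket Tv R (nomizuBracket Tv R q r) p
          + nomizuBracket Tv R (nomizuBracket Tv R r p) q = 0)
      ↔ ((∀ X Y Z W : E,
            ⟪(R X Y) Z, W⟫ + ⟪(R Y Z) X, W⟫ + ⟪(R Z X) Y, W⟫
              = ⟪Tv X Y, Tv Z W⟫ + ⟪Tv Y Z, Tv X W⟫ + ⟪Tv Z X, Tv Y W⟫)
          ∧ (∀ X Y Z : E, R (Tv X Y) Z + R (Tv Y Z) X + R (Tv Z X) Y = 0)) := by
    classical
  -- swap and linearity lemmas for T
  have swap01 : ∀ a b c : E, T ![a,b,c] = -T ![b,a,c] := by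
    intro a b c
    have h2 := T.map_swap (v := ![b,a,c]) (i := (0:Fin 3)) (j := 1) (by decide)
    have e : (![b,a,c] ∘ Equiv.swap (0:Fin 3) 1) = ![a,b,c] := by
      ext i; fin_cases i <;> simp [Equiv.swap_apply_def]
    rw [e] at h2; linarith
  have swap12 : ∀ a b c : E, T ![a,b,c] = -T ![a,c,b] := by
    intro a b c
    have h2 := T.map_swap (v := ![a,c,b]) (i := (1:Fin 3)) (j := 2) (by decide)
    have e : (![a,c,b] ∘ Equiv.swap (1:Fin 3) 2) = ![a,b,c] := by
      ext i; fin_cases i <;> simp [Equiv.swap_apply_def]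
    rw [e] at h2; linarith
  have cyc : ∀ a b c : E, T ![a,b,c] = T ![b,c,a] := by
    intro a b c
    rw [swap01 a b c, swap12 b a c, neg_neg]
  have Tadd : ∀ x y b c : E, T ![x+y,b,c] = T ![x,b,c] + T ![y,b,c] := by
    intro x y b c
    simpa using T.toMultilinearMap.cons_add ![b,c] x y
  have Tneg : ∀ x b c : E, T ![-x,b,c] = -T ![x,b,c] := by
    intro x b c
    simpa using T.toMultilinearMap.cons_smul ![b,c] (-1 : ℝ) x
  -- linearity of Tv in the first slot
  have Tv_add : ∀ a b Z : E, Tv (a+b) Z = Tv a Z + Tv b Z := by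
    intro a b Z
    apply ext_inner_right ℝ
    intro W
    rw [inner_add_left, hTv, hTv, hTv, Tadd]
  have Tv_neg : ∀ a Z : E, Tv (-a) Z = -Tv a Z := by
    intro a Z
    apply ext_inner_right ℝ
    intro W
    rw [inner_neg_left, hTv, hTv, Tneg]
  have Tv_sub : ∀ a b Z : E, Tv (a-b) Z = Tv a Z - Tv b Z := by
    intro a b Z
    rw [sub_eq_add_neg, Tv_add, Tv_neg, sub_eq_add_neg]
  -- pairing identity
  have hTT : ∀ X Y Z W : E, ⟪(Tv (Tv X Y) Z : E), W⟫ = ⟪(Tv X Y : E), Tv Z W⟫ := by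
    intro X Y Z W
    rw [hTv, cyc, ← hTv, real_inner_comm]
  -- antisymmetry of R
  have hRanti : ∀ X Y : E, R X Y = -R Y X := by
    intro X Y
    have h2 := hRalt (X + Y)
    simp only [map_add, LinearMap.add_apply, hRalt, zero_add, add_zero] at h2
    exact eq_neg_of_add_eq_zero_right h2
  -- invariance of Tv
  have hCTv : ∀ C ∈ h, ∀ X Y : E, C (Tv X Y) = Tv (C X) Y - Tv (C Y) X := by
    intro C hC X Y
    apply ext_inner_right ℝ
    intro W
    have h1 := hTinv C hC X Y W
    have h2 := swap01 (C Y) X W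
    rw [inner_sub_left, hskew C hC, hTv, hTv, hTv]
    linarith
  -- the key computation of the jacobiator
  have key : ∀ A, A ∈ h → ∀ B, B ∈ h → ∀ C, C ∈ h → ∀ X Y Z : E,
      nomizuBracket Tv R (nomizuBracket Tv R (A, X) (B, Y)) (C, Z)
        + nomizuBracket Tv R (nomizuBracket Tv R (B, Y) (C, Z)) (A, X)
        + nomizuBracket Tv R (nomizuBracket Tv R (C, Z) (A, X)) (B, Y)
      = (R (Tv X Y) Z + R (Tv Y Z) X + R (Tv Z X) Y,
         Tv (Tv X Y) Z + Tv (Tv Y Z) X + Tv (Tv Z X) Y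
           - ((R X Y) Z + (R Y Z) X + (R Z X) Y)) := by
    intro A hA B hB C hC X Y Z
    have eA : R (A Y) Z = ⁅A, R Y Z⁆ + R (A Z) Y := by
      have h1 := hReq A hA Y Z
      rw [hRanti Y (A Z)] at h1
      rw [← h1]; abel
    have eB : R (B Z) X = ⁅B, R Z X⁆ + R (B X) Z := by
      have h1 := hReq B hB Z X
      rw [hRanti Z (B X)] at h1
      rw [← h1]; abel
    have eC : R (C X) Y = ⁅C, R X Y⁆ + R (C Y) X := by
      have h1 := hReq C hC X Y
      rw [hRanti X (C Y)] at h1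
      rw [← h1]; abel
    have sA : ⁅A, R Y Z⁆ = -⁅R Y Z, A⁆ := (lie_skew A (R Y Z)).symm
    have sB : ⁅B, R Z X⁆ = -⁅R Z X, B⁆ := (lie_skew B (R Z X)).symm
    have sC : ⁅C, R X Y⁆ = -⁅R X Y, C⁆ := (lie_skew C (R X Y)).symm
    have hJac : ⁅⁅A,B⁆,C⁆ = -⁅⁅B,C⁆,A⁆ + -⁅⁅C,A⁆,B⁆ := by
      simp only [Ring.lie_def]
      noncomm_ring
    have hA' := hCTv A hA Y Z
    have hB' := hCTv B hB Z X
    have hC' := hCTv C hC X Y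
    simp only [nomizuBracket, Prod.mk_add_mk, Prod.mk.injEq]
    constructor
    · simp only [sub_lie, map_sub, LinearMap.sub_apply]
      rw [eA, eB, eC, sA, sB, sC, hJac]
      abel
    · simp only [Ring.lie_def, LinearMap.sub_apply, Module.End.mul_apply, map_sub,
        Tv_sub]
      rw [hA', hB', hC']
      abel
  constructor
  · intro hJ
    have h0 : (0 : Module.End ℝ E) ∈ h := h.zero_mem
    have keyz : ∀ X Y Z : E,
        (R (Tv X Y) Z + R (Tv Y Z) X + R (Tv Z X) Y,
          Tv (Tv X Y) Z + Tv (Tv Y Z) X + Tv (Tv Z X) Y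
            - ((R X Y) Z + (R Y Z) X + (R Z X) Y))
          = ((0 : Module.End ℝ E), (0 : E)) := by
      intro X Y Z
      rw [← key 0 h0 0 h0 0 h0 X Y Z]
      exact hJ (0, X) (0, Y) (0, Z) h0 h0 h0
    constructor
    · intro X Y Z W
      have e2 := (Prod.mk.injEq _ _ _ _).mp (keyz X Y Z) |>.2
      have e2' : Tv (Tv X Y) Z + Tv (Tv Y Z) X + Tv (Tv Z X) Y
          = (R X Y) Z + (R Y Z) X + (R Z X) Y := sub_eq_zero.mp e2
      have e3 : ⟪(Tv (Tv X Y) Z + Tv (Tv Y Z) X + Tv (Tv Z X) Y : E), W⟫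
          = ⟪((R X Y) Z + (R Y Z) X + (R Z X) Y : E), W⟫ := by rw [e2']
      simp only [inner_add_left] at e3
      rw [hTT, hTT, hTT] at e3
      linarith
    · intro X Y Z
      exact ((Prod.mk.injEq _ _ _ _).mp (keyz X Y Z)).1
  · rintro ⟨h1, h2⟩ p q r hp hq hr
    obtain ⟨A, X⟩ := p
    obtain ⟨B, Y⟩ := q
    obtain ⟨C, Z⟩ := r
    rw [key A hp B hq C hr X Y Z]
    have e2' : Tv (Tv X Y) Z + Tv (Tv Y Z) X + Tv (Tv Z X) Y
        = (R X Y) Z + (R Y Z) X + (R Z X) Y := by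
      apply ext_inner_right ℝ
      intro W
      simp only [inner_add_left]
      rw [hTT, hTT, hTT]
      exact (h1 X Y Z W).symm
    rw [h2 X Y Z, e2', sub_self]
    rfl
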